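/- Limit of the Carleman boundary function G at infinity along ℛ⁻ (Lemma 3.4). Assume r11 > 0, r22 > 0 and detR > 0. With Z(θ1) = (−(σ12θ1 + μ2) − i·√(−D1(θ1)))/σ22, define 𝒢(θ1) = (γ1(θ1, Z(θ1))·γ2(θ1, conj Z(θ1)))/(γ2(θ1, Z(θ1))·γ1(θ1, conj Z(θ1))). Then as θ1 → −∞, 𝒢(θ1) tends to the unimodular complex number (A − i·detR·√(detΣ))/(A + i·detR·√(detΣ)), where A = σ22·r11·r12 + σ11·r22·r21 − σ12·(r11·r22 + r12·r21); in particular the modulus of this limit equals 1. -/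

import Mathlib

open Complex Filter Topology

/-- Limit of the Carleman boundary function G at infinity along ℛ⁻ (Lemma 3.4). -/
theorem stmt5 (σ11 σ22 σ12 μ1 μ2 r11 r12 r21 r22 : ℝ)
    (hσ11 : 0 < σ11) (hσ22 : 0 < σ22) (hdet : 0 < σ11 * σ22 - σ12 ^ 2)
    (hr11 : 0 < r11) (hr22 : 0 < r22) (hdetR : 0 < r11 * r22 - r12 * r21)
    (D1 : ℝ → ℝ)
    (hD1 : ∀ t : ℝ, D1 t = t ^ 2 * (σ12 ^ 2 - σ11 * σ22)
      + 2 * t * (μ2 * σ12 - μ1 * σ22) + μ2 ^ 2)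
    (Z : ℝ → ℂ)
    (hZ : ∀ t : ℝ, Z t = (-((σ12 : ℂ) * t + (μ2 : ℂ))
      - (Real.sqrt (-D1 t) : ℂ) * I) / (σ22 : ℂ))
    (G : ℝ → ℂ)
    (hG : ∀ t : ℝ, G t = (((r11 : ℂ) * t + (r21 : ℂ) * Z t)
        * ((r12 : ℂ) * t + (r22 : ℂ) * starRingEnd ℂ (Z t)))
      / (((r12 : ℂ) * t + (r22 : ℂ) * Z t)
        * ((r11 : ℂ) * t + (r21 : ℂ) * starRingEnd ℂ (Z t))))
    (A : ℝ)
    (hA : A = σ22 * r11 * r12 + σ11 * r22 * r21 - σ12 * (r11 * r22 + r12 * r21)) :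
    Tendsto G atBot
      (nhds (((A : ℂ) - ((r11 * r22 - r12 * r21 : ℝ) : ℂ)
          * (Real.sqrt (σ11 * σ22 - σ12 ^ 2) : ℂ) * I)
        / ((A : ℂ) + ((r11 * r22 - r12 * r21 : ℝ) : ℂ)
          * (Real.sqrt (σ11 * σ22 - σ12 ^ 2) : ℂ) * I)))
    ∧ ‖((A : ℂ) - ((r11 * r22 - r12 * r21 : ℝ) : ℂ)
          * (Real.sqrt (σ11 * σ22 - σ12 ^ 2) : ℂ) * I)
        / ((A : ℂ) + ((r11 * r22 - r12 * r21 : ℝ) : ℂ)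
          * (Real.sqrt (σ11 * σ22 - σ12 ^ 2) : ℂ) * I)‖ = 1 := by
  set d : ℝ := σ11 * σ22 - σ12 ^ 2 with hd
  set s : ℝ := Real.sqrt d with hsdef
  have hs : 0 < s := Real.sqrt_pos.mpr hdet
  have hs2 : s ^ 2 = d := Real.sq_sqrt hdet.le
  set c : ℝ := μ2 * σ12 - μ1 * σ22 with hc
  set dR : ℝ := r11 * r22 - r12 * r21 with hdR
  have hσ22c : (σ22 : ℂ) ≠ 0 := by exact_mod_cast hσ22.ne'
  -- the target denominator is nonzero
  have hTden : ((A : ℂ) + (dR : ℂ) * (s : ℂ) * I) ≠ 0 := by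
    intro h
    have him := congrArg Complex.im h
    simp at him
    rcases him with h | h
    · exact hdetR.ne' h
    · exact hs.ne' h
  -- step 1: sqrt(-D1 t)/t → -s
  have hu : Tendsto (fun t : ℝ => d - 2 * c * t⁻¹ - μ2 ^ 2 * t⁻¹ ^ 2)
      atBot (𝓝 d) := by
    have h0 : Tendsto (fun t : ℝ => t⁻¹) atBot (𝓝 (0 : ℝ)) := by
      have hneg : Tendsto (fun t : ℝ => -t) atBot atTop := tendsto_neg_atBot_atTop
      have := ((tendsto_inv_atTop_zero (𝕜 := ℝ)).comp hneg).neg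
      simpa [Function.comp, inv_neg, neg_neg] using this
    simpa using ((tendsto_const_nhds (x := d) (f := atBot)).sub
      (h0.const_mul (2 * c))).sub ((h0.pow 2).const_mul (μ2 ^ 2))
  have hb : Tendsto (fun t : ℝ => Real.sqrt (-D1 t) / t) atBot (𝓝 (-s)) := by
    have hsq : Tendsto (fun t : ℝ => -Real.sqrt (d - 2 * c * t⁻¹ - μ2 ^ 2 * t⁻¹ ^ 2))
        atBot (𝓝 (-s)) := ((Real.continuous_sqrt.tendsto d).comp hu).neg
    refine Tendsto.congr' ?_ hsq
    filter_upwards [eventually_lt_atBot (0 : ℝ)] with t ht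
    have htne : t ≠ 0 := ht.ne
    have hDeq : -D1 t = t ^ 2 * (d - 2 * c * t⁻¹ - μ2 ^ 2 * t⁻¹ ^ 2) := by
      rw [hD1 t]; field_simp; ring
    rw [hDeq, Real.sqrt_mul (sq_nonneg t), Real.sqrt_sq_eq_abs, abs_of_neg ht]
    field_simp
  -- step 2: Z t / t → z
  set z : ℂ := (-(σ12 : ℂ) + (s : ℂ) * I) / (σ22 : ℂ) with hzdef
  have hzt : Tendsto (fun t : ℝ => Z t / (t : ℂ)) atBot (𝓝 z) := by
    have hx : Tendsto (fun t : ℝ => -σ12 - μ2 * t⁻¹) atBot (𝓝 (-σ12)) := by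
      have h0 : Tendsto (fun t : ℝ => t⁻¹) atBot (𝓝 (0 : ℝ)) := by
        have hneg : Tendsto (fun t : ℝ => -t) atBot atTop := tendsto_neg_atBot_atTop
        have := ((tendsto_inv_atTop_zero (𝕜 := ℝ)).comp hneg).neg
        simpa [Function.comp, inv_neg, neg_neg] using this
      simpa using (tendsto_const_nhds (x := -σ12) (f := atBot)).sub
        (h0.const_mul μ2)
    have hy : Tendsto (fun t : ℝ => -(Real.sqrt (-D1 t) / t)) atBot (𝓝 s) := by
      simpa using hb.neg
    have hg : Tendsto (fun t : ℝ =>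
        (((-σ12 - μ2 * t⁻¹ : ℝ) : ℂ) + ((-(Real.sqrt (-D1 t) / t) : ℝ) : ℂ) * I)
          / (σ22 : ℂ)) atBot (𝓝 z) := by
      have h1 := ((Complex.continuous_ofReal.tendsto _).comp hx).add
        (((Complex.continuous_ofReal.tendsto _).comp hy).mul_const I)
      have := h1.div_const (σ22 : ℂ)
      simpa [hzdef] using this
    refine Tendsto.congr' ?_ hg
    filter_upwards [eventually_lt_atBot (0 : ℝ)] with t ht
    have htne : (t : ℂ) ≠ 0 := by exact_mod_cast ht.ne
    rw [hZ t]
    push_cast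
    field_simp
    ring
  have hzc : Tendsto (fun t : ℝ => (starRingEnd ℂ) (Z t) / (t : ℂ)) atBot
      (𝓝 ((starRingEnd ℂ) z)) := by
    have := (Complex.continuous_conj.tendsto z).comp hzt
    refine Tendsto.congr' ?_ this
    filter_upwards with t
    simp [map_div₀, Complex.conj_ofReal]
  -- limits of numerator and denominator
  have hconjz : (starRingEnd ℂ) z = (-(σ12 : ℂ) - (s : ℂ) * I) / (σ22 : ℂ) := by
    rw [hzdef]
    simp [map_div₀, Complex.conj_ofReal]
    ring
  have hs2c : ((s : ℂ)) ^ 2 = ((σ11 : ℂ) * σ22 - (σ12 : ℂ) ^ 2) := by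
    have h := congrArg (fun x : ℝ => (x : ℂ)) hs2
    simp only [hd] at h
    push_cast at h
    simpa using h
  have hNumEq : ((r11 : ℂ) + r21 * z) * ((r12 : ℂ) + r22 * (starRingEnd ℂ) z)
      = ((A : ℂ) - (dR : ℂ) * (s : ℂ) * I) / (σ22 : ℂ) := by
    rw [hzdef, hconjz, hA, hdR]
    push_cast
    field_simp
    linear_combination ((r21:ℂ) * r22) * hs2c
      - ((r21:ℂ) * r22 * (s:ℂ)^2) * Complex.I_sq
  have hDenEq : ((r12 : ℂ) + r22 * z) * ((r11 : ℂ) + r21 * (starRingEnd ℂ) z)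
      = ((A : ℂ) + (dR : ℂ) * (s : ℂ) * I) / (σ22 : ℂ) := by
    rw [hzdef, hconjz, hA, hdR]
    push_cast
    field_simp
    linear_combination ((r21:ℂ) * r22) * hs2c
      - ((r21:ℂ) * r22 * (s:ℂ)^2) * Complex.I_sq
  have hDne : ((r12 : ℂ) + r22 * z) * ((r11 : ℂ) + r21 * (starRingEnd ℂ) z) ≠ 0 := by
    rw [hDenEq]
    exact div_ne_zero hTden hσ22c
  -- main limit
  have hmain : Tendsto G atBot (𝓝 (((A : ℂ) - (dR : ℂ) * (s : ℂ) * I)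
      / ((A : ℂ) + (dR : ℂ) * (s : ℂ) * I))) := by
    have hN : Tendsto (fun t : ℝ =>
        ((r11 : ℂ) + r21 * (Z t / t)) * ((r12 : ℂ) + r22 * ((starRingEnd ℂ) (Z t) / t)))
        atBot (𝓝 (((r11 : ℂ) + r21 * z) * ((r12 : ℂ) + r22 * (starRingEnd ℂ) z))) :=
      ((tendsto_const_nhds.add (hzt.const_mul _)).mul
        (tendsto_const_nhds.add (hzc.const_mul _)))
    have hD : Tendsto (fun t : ℝ =>
        ((r12 : ℂ) + r22 * (Z t / t)) * ((r11 : ℂ) + r21 * ((starRingEnd ℂ) (Z t) / t)))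
        atBot (𝓝 (((r12 : ℂ) + r22 * z) * ((r11 : ℂ) + r21 * (starRingEnd ℂ) z))) :=
      ((tendsto_const_nhds.add (hzt.const_mul _)).mul
        (tendsto_const_nhds.add (hzc.const_mul _)))
    have hq := hN.div hD hDne
    rw [hNumEq, hDenEq, div_div_div_cancel_right₀ hσ22c] at hq
    refine Tendsto.congr' ?_ hq
    filter_upwards [eventually_lt_atBot (0 : ℝ)] with t ht
    have htne : (t : ℂ) ≠ 0 := by exact_mod_cast ht.ne
    have ht2 : (t : ℂ) ^ 2 ≠ 0 := pow_ne_zero 2 htne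
    rw [hG t]
    rw [show ((r11 : ℂ) * t + r21 * Z t) * ((r12 : ℂ) * t + r22 * (starRingEnd ℂ) (Z t))
        = (t : ℂ) ^ 2 * (((r11 : ℂ) + r21 * (Z t / t)) * ((r12 : ℂ) + r22 * ((starRingEnd ℂ) (Z t) / t)))
        by field_simp; try ring]
    rw [show ((r12 : ℂ) * t + r22 * Z t) * ((r11 : ℂ) * t + r21 * (starRingEnd ℂ) (Z t))
        = (t : ℂ) ^ 2 * (((r12 : ℂ) + r22 * (Z t / t)) * ((r11 : ℂ) + r21 * ((starRingEnd ℂ) (Z t) / t)))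
        by field_simp; try ring]
    rw [mul_div_mul_left _ _ ht2]
    rfl
  constructor
  · exact hmain
  · have hTnum : ((A : ℂ) - (dR : ℂ) * (s : ℂ) * I) ≠ 0 := by
      intro h
      have him := congrArg Complex.im h
      simp at him
      rcases him with h | h
      · exact hdetR.ne' h
      · exact hs.ne' h
    have hconjT : (starRingEnd ℂ) ((A : ℂ) - (dR : ℂ) * (s : ℂ) * I)
        = ((A : ℂ) + (dR : ℂ) * (s : ℂ) * I) := by
      simp [map_sub, map_mul, Complex.conj_ofReal]
      try ring
    rw [norm_div, ← hconjT, Complex.norm_conj]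
    exact div_self (norm_ne_zero_iff.mpr hTnum)
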